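/- A vector ρ ∈ ℝ^N satisfies Σ_{x ∈ D} ρ(D,x) = 0 for every nonempty D ⊆ X if and only if Kρ is a flow on the Boolean lattice graph with total flow 0. Consequently, the image of KB equals the space of all flows with total flow 0. -/
import Mathlib


open Finset

/-- Möbius operator. -/
noncomputable def Kop (n : ℕ) (ρ : Finset (Fin n) → Fin n → ℝ)
    (D : Finset (Fin n)) (x : Fin n) : ℝ :=
  ∑ E ∈ univ.filter (fun E => D ⊆ E), (-1 : ℝ) ^ (E \ D).card * ρ E x

/-- The reduced-coordinate embedding `B`. -/
noncomputable def Bop (n : ℕ) (ξ : Finset (Fin n) → Fin n → ℝ)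
    (D : Finset (Fin n)) (x : Fin n) : ℝ :=
  if h : D.Nonempty then
    if x = D.max' h then -∑ y ∈ D.erase (D.max' h), ξ D y else ξ D x
  else 0

/-- Flow conservation on the Boolean lattice graph. -/
def IsFlow (n : ℕ) (κ : Finset (Fin n) → Fin n → ℝ) : Prop :=
  ∀ D : Finset (Fin n), D ≠ ∅ → D ≠ univ →
    ∑ x ∈ D, κ D x = ∑ y ∈ Dᶜ, κ (insert y D) y

section Aux
variable {n : ℕ}

lemma powerset_sign (s : Finset (Fin n)) :
    ∑ t ∈ s.powerset, (-1 : ℝ) ^ t.card = if s = ∅ then 1 else 0 := by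
  have h := Finset.sum_powerset_neg_one_pow_card (x := s)
  have h2 : ((∑ m ∈ s.powerset, (-1 : ℤ) ^ m.card : ℤ) : ℝ)
      = ∑ t ∈ s.powerset, (-1 : ℝ) ^ t.card := by push_cast; rfl
  rw [← h2, h]
  split <;> norm_num

lemma sign_sum_lower (D F : Finset (Fin n)) (hDF : D ⊆ F) :
    ∑ E ∈ univ.filter (fun E => D ⊆ E ∧ E ⊆ F), (-1 : ℝ) ^ (E \ D).card
      = if F = D then 1 else 0 := by
  have hiff : (F = D) ↔ (F \ D = ∅) := by
    rw [sdiff_eq_empty_iff_subset]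
    exact ⟨fun h => h ▸ Subset.refl _, fun h => subset_antisymm h hDF⟩
  rw [if_congr hiff rfl rfl, ← powerset_sign (F \ D)]
  apply Finset.sum_nbij' (i := fun E => E \ D) (j := fun t => D ∪ t)
  · intro E hE
    simp only [mem_filter, mem_univ, true_and] at hE
    exact mem_powerset.2 (sdiff_subset_sdiff hE.2 (Subset.refl D))
  · intro t ht
    simp only [mem_powerset] at ht
    simp only [mem_filter, mem_univ, true_and]
    exact ⟨subset_union_left, union_subset hDF (ht.trans sdiff_subset)⟩
  · intro E hE
    simp only [mem_filter, mem_univ, true_and] at hE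
    exact union_sdiff_of_subset hE.1
  · intro t ht
    simp only [mem_powerset] at ht
    have hd : Disjoint D t := (disjoint_sdiff.mono_right ht)
    rw [union_sdiff_cancel_left hd]
  · intros; rfl

lemma sign_sum_upper (D F : Finset (Fin n)) (hDF : D ⊆ F) :
    ∑ E ∈ univ.filter (fun E => D ⊆ E ∧ E ⊆ F), (-1 : ℝ) ^ (F \ E).card
      = if F = D then 1 else 0 := by
  have hiff : (F = D) ↔ (F \ D = ∅) := by
    rw [sdiff_eq_empty_iff_subset]
    exact ⟨fun h => h ▸ Subset.refl _, fun h => subset_antisymm h hDF⟩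
  rw [if_congr hiff rfl rfl, ← powerset_sign (F \ D)]
  apply Finset.sum_nbij' (i := fun E => F \ E) (j := fun t => F \ t)
  · intro E hE
    simp only [mem_filter, mem_univ, true_and] at hE
    exact mem_powerset.2 (sdiff_subset_sdiff (Subset.refl F) hE.1)
  · intro t ht
    simp only [mem_powerset] at ht
    simp only [mem_filter, mem_univ, true_and]
    refine ⟨?_, sdiff_subset⟩
    intro x hx
    simp only [mem_sdiff]
    exact ⟨hDF hx, fun hxt => (mem_sdiff.1 (ht hxt)).2 hx⟩
  · intro E hE
    simp only [mem_filter, mem_univ, true_and] at hE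
    exact Finset.sdiff_sdiff_eq_self hE.2
  · intro t ht
    simp only [mem_powerset] at ht
    exact Finset.sdiff_sdiff_eq_self (ht.trans sdiff_subset)
  · intros; rfl

/-- scalar Möbius transform -/
noncomputable def Ksc (f : Finset (Fin n) → ℝ) (D : Finset (Fin n)) : ℝ :=
  ∑ E ∈ univ.filter (fun E => D ⊆ E), (-1 : ℝ) ^ (E \ D).card * f E

lemma Ksc_inv (f : Finset (Fin n) → ℝ) (D : Finset (Fin n)) :
    ∑ E ∈ univ.filter (fun E => D ⊆ E), Ksc f E = f D := by
  unfold Ksc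
  rw [Finset.sum_comm' (t' := univ.filter (fun F => D ⊆ F))
    (s' := fun F => univ.filter (fun E => D ⊆ E ∧ E ⊆ F))
    (h := by
      intro E F
      simp only [mem_filter, mem_univ, true_and]
      constructor
      · rintro ⟨h1, h2⟩; exact ⟨⟨h1, h2⟩, h1.trans h2⟩
      · rintro ⟨⟨h1, h2⟩, _⟩; exact ⟨h1, h2⟩)]
  have : ∀ F ∈ univ.filter (fun F => D ⊆ F),
      ∑ E ∈ univ.filter (fun E => D ⊆ E ∧ E ⊆ F), (-1 : ℝ) ^ (F \ E).card * f F
        = (if F = D then 1 else 0) * f F := by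
    intro F hF
    simp only [mem_filter, mem_univ, true_and] at hF
    rw [← Finset.sum_mul, sign_sum_upper D F hF]
  rw [Finset.sum_congr rfl this]
  simp [Finset.sum_ite_eq', Finset.mem_filter]

lemma Ksc_of_sum (g : Finset (Fin n) → ℝ) (D : Finset (Fin n)) :
    Ksc (fun E => ∑ F ∈ univ.filter (fun F => E ⊆ F), g F) D = g D := by
  unfold Ksc
  simp only [Finset.mul_sum]
  rw [Finset.sum_comm' (t' := univ.filter (fun F => D ⊆ F))
    (s' := fun F => univ.filter (fun E => D ⊆ E ∧ E ⊆ F))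
    (h := by
      intro E F
      simp only [mem_filter, mem_univ, true_and]
      constructor
      · rintro ⟨h1, h2⟩; exact ⟨⟨h1, h2⟩, h1.trans h2⟩
      · rintro ⟨⟨h1, h2⟩, _⟩; exact ⟨h1, h2⟩)]
  have : ∀ F ∈ univ.filter (fun F => D ⊆ F),
      ∑ E ∈ univ.filter (fun E => D ⊆ E ∧ E ⊆ F), (-1 : ℝ) ^ (E \ D).card * g F
        = (if F = D then 1 else 0) * g F := by
    intro F hF
    simp only [mem_filter, mem_univ, true_and] at hF
    rw [← Finset.sum_mul, sign_sum_lower D F hF]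
  rw [Finset.sum_congr rfl this]
  simp [Finset.sum_ite_eq', Finset.mem_filter]

end Aux

section Aux2
variable {n : ℕ}

lemma filter_univ_subset :
    (univ.filter (fun E => (univ : Finset (Fin n)) ⊆ E)) = {univ} := by
  ext E; simp [univ_subset_iff, eq_comm]

lemma Kop_univ (ρ : Finset (Fin n) → Fin n → ℝ) (x : Fin n) :
    Kop n ρ univ x = ρ univ x := by
  unfold Kop; rw [filter_univ_subset]; simp

lemma Ksc_univ (f : Finset (Fin n) → ℝ) : Ksc f univ = f univ := by
  unfold Ksc; rw [filter_univ_subset]; simp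

lemma flow_identity (ρ : Finset (Fin n) → Fin n → ℝ) (D : Finset (Fin n)) :
    ∑ x ∈ D, Kop n ρ D x
      = ∑ y ∈ Dᶜ, Kop n ρ (insert y D) y
        + Ksc (fun E => ∑ x ∈ E, ρ E x) D := by
  have hL : ∑ x ∈ D, Kop n ρ D x
      = ∑ E ∈ univ.filter (fun E => D ⊆ E),
          (-1 : ℝ) ^ (E \ D).card * ∑ x ∈ D, ρ E x := by
    unfold Kop; rw [Finset.sum_comm]
    exact Finset.sum_congr rfl fun E _ => by rw [Finset.mul_sum]
  have hR : ∑ y ∈ Dᶜ, Kop n ρ (insert y D) y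
      = ∑ E ∈ univ.filter (fun E => D ⊆ E),
          -((-1 : ℝ) ^ (E \ D).card) * ∑ y ∈ E \ D, ρ E y := by
    unfold Kop
    rw [Finset.sum_comm' (t' := univ.filter (fun E => D ⊆ E))
      (s' := fun E => E \ D)
      (h := by
        intro y E
        simp only [mem_filter, mem_univ, true_and, mem_compl, mem_sdiff,
          insert_subset_iff]
        constructor
        · rintro ⟨h1, h2, h3⟩; exact ⟨⟨h2, h1⟩, h3⟩
        · rintro ⟨⟨h1, h2⟩, h3⟩; exact ⟨h2, h1, h3⟩)]
    refine Finset.sum_congr rfl fun E hE => ?_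
    rw [Finset.mul_sum]
    refine Finset.sum_congr rfl fun y hy => ?_
    have h1 : E \ insert y D = (E \ D).erase y := by
      rw [Finset.sdiff_insert]
    have h2 : (E \ D).card = ((E \ D).erase y).card + 1 := by
      rw [Finset.card_erase_of_mem hy]
      have : 0 < (E \ D).card := Finset.card_pos.2 ⟨y, hy⟩
      omega
    rw [h1, h2, pow_succ]
    ring
  rw [hL, hR]
  unfold Ksc
  rw [← Finset.sum_add_distrib]
  refine Finset.sum_congr rfl fun E hE => ?_
  simp only [mem_filter, mem_univ, true_and] at hE
  have h3 : ∑ x ∈ E \ D, ρ E x + ∑ x ∈ D, ρ E x = ∑ x ∈ E, ρ E x :=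
    Finset.sum_sdiff hE
  simp only []
  rw [← h3]
  ring
end Aux2

section Main
variable {n : ℕ}

lemma total_eq (ρ : Finset (Fin n) → Fin n → ℝ) :
    ∑ x : Fin n, Kop n ρ univ x = ∑ x ∈ (univ : Finset (Fin n)), ρ univ x :=
  Finset.sum_congr rfl fun x _ => Kop_univ ρ x

lemma part1 (hn : 0 < n) (ρ : Finset (Fin n) → Fin n → ℝ) :
    (∀ D : Finset (Fin n), D.Nonempty → ∑ x ∈ D, ρ D x = 0) ↔
      (IsFlow n (Kop n ρ) ∧ ∑ x : Fin n, Kop n ρ univ x = 0) := by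
  set S : Finset (Fin n) → ℝ := fun E => ∑ x ∈ E, ρ E x with hS
  constructor
  · intro h
    have hK0 : ∀ D : Finset (Fin n), D ≠ ∅ → Ksc S D = 0 := by
      intro D hD
      refine Finset.sum_eq_zero fun E hE => ?_
      simp only [mem_filter, mem_univ, true_and] at hE
      have : S E = 0 := h E ((nonempty_iff_ne_empty.2 hD).mono hE)
      rw [this, mul_zero]
    constructor
    · intro D hD hDu
      have := flow_identity ρ D
      rw [hK0 D hD, add_zero] at this
      exact this
    · rw [total_eq]
      exact h univ (univ_nonempty_iff.2 ⟨⟨0, hn⟩⟩)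
  · rintro ⟨hf, ht⟩
    have hK0 : ∀ E : Finset (Fin n), E ≠ ∅ → Ksc S E = 0 := by
      intro E hE
      by_cases hu : E = univ
      · subst hu
        rw [Ksc_univ]
        rw [total_eq] at ht
        exact ht
      · have := flow_identity ρ E
        rw [hf E hE hu] at this
        linarith
    intro D hD
    have hinv := Ksc_inv S D
    have : S D = ∑ x ∈ D, ρ D x := rfl
    rw [← this, ← hinv]
    refine Finset.sum_eq_zero fun E hE => ?_
    simp only [mem_filter, mem_univ, true_and] at hE
    exact hK0 E (nonempty_iff_ne_empty.1 (hD.mono hE))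


/-- `ρ` sums to zero on every nonempty `D` iff `Kρ` is a flow with total
flow 0; consequently the image of `KB` is exactly the space of flows with
total flow 0 (on the meaningful coordinates `x ∈ D`). -/
theorem sum_zero_iff_flow_zero_and_image_KB (n : ℕ) (hn : 0 < n) :
    (∀ ρ : Finset (Fin n) → Fin n → ℝ,
      (∀ D : Finset (Fin n), D.Nonempty → ∑ x ∈ D, ρ D x = 0) ↔
        (IsFlow n (Kop n ρ) ∧ ∑ x : Fin n, Kop n ρ univ x = 0)) ∧
    (∀ κ : Finset (Fin n) → Fin n → ℝ,
      (IsFlow n κ ∧ ∑ x : Fin n, κ univ x = 0) ↔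
        ∃ ξ : Finset (Fin n) → Fin n → ℝ,
          ∀ D : Finset (Fin n), ∀ x ∈ D, Kop n (Bop n ξ) D x = κ D x) := by
  refine ⟨part1 hn, fun κ => ⟨?_, ?_⟩⟩
  · rintro ⟨hf, ht⟩
    set ρ : Finset (Fin n) → Fin n → ℝ :=
      fun D x => ∑ F ∈ univ.filter (fun F => D ⊆ F), κ F x with hρ
    have hKρ : ∀ D x, Kop n ρ D x = κ D x := by
      intro D x
      exact Ksc_of_sum (fun F => κ F x) D
    have hKρ' : Kop n ρ = κ := funext fun D => funext fun x => hKρ D x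
    have hSρ : ∀ D : Finset (Fin n), D.Nonempty → ∑ x ∈ D, ρ D x = 0 := by
      refine (part1 hn ρ).2 ?_
      rw [hKρ']
      exact ⟨hf, ht⟩
    have hBρ : ∀ (E : Finset (Fin n)) (x : Fin n), x ∈ E → Bop n ρ E x = ρ E x := by
      intro E x hxE
      have hE : E.Nonempty := ⟨x, hxE⟩
      unfold Bop
      rw [dif_pos hE]
      by_cases hxm : x = E.max' hE
      · rw [if_pos hxm]
        have h0 := hSρ E hE
        have h1 := Finset.sum_erase_add E (ρ E) (E.max'_mem hE)
        rw [hxm]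
        linarith
      · rw [if_neg hxm]
    refine ⟨ρ, fun D x hx => ?_⟩
    rw [← hKρ D x]
    unfold Kop
    refine Finset.sum_congr rfl fun E hE => ?_
    simp only [mem_filter, mem_univ, true_and] at hE
    rw [hBρ E x (hE hx)]
  · rintro ⟨ξ, hξ⟩
    have hsum : ∀ D : Finset (Fin n), D.Nonempty → ∑ x ∈ D, Bop n ξ D x = 0 := by
      intro D hD
      rw [← Finset.sum_erase_add D _ (D.max'_mem hD)]
      have h1 : Bop n ξ D (D.max' hD) = -∑ y ∈ D.erase (D.max' hD), ξ D y := by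
        unfold Bop; rw [dif_pos hD, if_pos rfl]
      have h2 : ∀ x ∈ D.erase (D.max' hD), Bop n ξ D x = ξ D x := by
        intro x hx
        unfold Bop
        rw [dif_pos hD, if_neg (Finset.ne_of_mem_erase hx)]
      rw [h1, Finset.sum_congr rfl h2]
      ring
    have hmain := (part1 hn (Bop n ξ)).1 hsum
    constructor
    · intro D hD hDu
      have h1 : ∑ x ∈ D, κ D x = ∑ x ∈ D, Kop n (Bop n ξ) D x :=
        Finset.sum_congr rfl fun x hx => (hξ D x hx).symm
      have h2 : ∑ y ∈ Dᶜ, κ (insert y D) y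
          = ∑ y ∈ Dᶜ, Kop n (Bop n ξ) (insert y D) y :=
        Finset.sum_congr rfl fun y _ =>
          (hξ (insert y D) y (mem_insert_self y D)).symm
      rw [h1, h2]
      exact hmain.1 D hD hDu
    · have h1 : ∑ x : Fin n, κ univ x = ∑ x : Fin n, Kop n (Bop n ξ) univ x :=
        Finset.sum_congr rfl fun x _ => (hξ univ x (mem_univ x)).symm
      rw [h1]
      exact hmain.2
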